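/- arXiv:1508.07605 — 3 statements merged into one kernel-verified Lean document; each statement's English description precedes it below -/
import Mathlib

section
/- Let n be a positive integer and let A be an invertible matrix in M_n(ℝ) such that every entry of A and every entry of A⁻¹ is nonnegative. Then there exist a permutation σ of {1,…,n} and a diagonal matrix D with strictly positive diagonal entries such that A = D·U(σ). -/
/-- An invertible real matrix `A` with nonnegative entries whose inverse also has nonnegative
entries factors as `A = D * U(σ)` where `D` is diagonal with strictly positive diagonal
entries and `U(σ)` is the permutation matrix with `U(σ) i j = 1` iff `j = σ i`. -/
theorem stmt1 (n : ℕ) (hn : 0 < n) (A : Matrix (Fin n) (Fin n) ℝ)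
    (hA : IsUnit A)
    (hApos : ∀ i j, 0 ≤ A i j) (hAinvpos : ∀ i j, 0 ≤ A⁻¹ i j) :
    ∃ (σ : Equiv.Perm (Fin n)) (d : Fin n → ℝ), (∀ i, 0 < d i) ∧
      A = Matrix.diagonal d *
        Matrix.of (fun i j => if j = σ i then (1 : ℝ) else 0) := by
  have hdet : IsUnit A.det := (Matrix.isUnit_iff_isUnit_det A).mp hA
  have h1 : A * A⁻¹ = 1 := Matrix.mul_nonsing_inv A hdet
  have h2 : A⁻¹ * A = 1 := Matrix.nonsing_inv_mul A hdet
  have hmul1 : ∀ i j, ∑ k, A i k * A⁻¹ k j = (1 : Matrix (Fin n) (Fin n) ℝ) i j := by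
    intro i j; rw [← h1, Matrix.mul_apply]
  have hmul2 : ∀ i j, ∑ k, A⁻¹ i k * A k j = (1 : Matrix (Fin n) (Fin n) ℝ) i j := by
    intro i j; rw [← h2, Matrix.mul_apply]
  -- off-diagonal terms of A * A⁻¹ vanish termwise
  have hz : ∀ i j, i ≠ j → ∀ k, A i k * A⁻¹ k j = 0 := by
    intro i j hij k
    have hs : ∑ k, A i k * A⁻¹ k j = 0 := by
      rw [hmul1]; simp [Matrix.one_apply, hij]
    exact (Finset.sum_eq_zero_iff_of_nonneg
      (fun k _ => mul_nonneg (hApos i k) (hAinvpos k j))).mp hs k (Finset.mem_univ k)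
  -- for each row i there is k with A i k > 0 and A⁻¹ k i > 0
  have hex : ∀ i, ∃ k, 0 < A i k ∧ 0 < A⁻¹ k i := by
    intro i
    have hs : ∑ k, A i k * A⁻¹ k i = 1 := by rw [hmul1]; simp [Matrix.one_apply]
    by_contra h
    push_neg at h
    have hall : ∀ k ∈ Finset.univ, A i k * A⁻¹ k i = 0 := by
      intro k _
      rcases (hApos i k).lt_or_eq with hpos | heq
      · rcases (hAinvpos k i).lt_or_eq with hpos' | heq'
        · exact absurd hpos' (not_lt.mpr (h k hpos))
        · rw [← heq', mul_zero]
      · rw [← heq, zero_mul]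
    rw [Finset.sum_eq_zero hall] at hs
    exact zero_ne_one hs
  -- for each column k of A⁻¹ there is j with A⁻¹ k j > 0 and A j k > 0
  have hex' : ∀ k, ∃ j, 0 < A⁻¹ k j ∧ 0 < A j k := by
    intro k
    have hs : ∑ j, A⁻¹ k j * A j k = 1 := by rw [hmul2]; simp [Matrix.one_apply]
    by_contra h
    push_neg at h
    have hall : ∀ j ∈ Finset.univ, A⁻¹ k j * A j k = 0 := by
      intro j _
      rcases (hAinvpos k j).lt_or_eq with hpos | heq
      · rcases (hApos j k).lt_or_eq with hpos' | heq'
        · exact absurd hpos' (not_lt.mpr (h j hpos))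
        · rw [← heq', mul_zero]
      · rw [← heq, zero_mul]
    rw [Finset.sum_eq_zero hall] at hs
    exact zero_ne_one hs
  classical
  set σ0 : Fin n → Fin n := fun i => Classical.choose (hex i) with hσ0
  have hσ0A : ∀ i, 0 < A i (σ0 i) := fun i => (Classical.choose_spec (hex i)).1
  have hσ0Ainv : ∀ i, 0 < A⁻¹ (σ0 i) i := fun i => (Classical.choose_spec (hex i)).2
  -- injectivity of σ0
  have hinj : Function.Injective σ0 := by
    intro i i' hii
    by_contra hne
    have hzz := hz i' i (fun h => hne h.symm) (σ0 i')
    have hp : 0 < A i' (σ0 i') * A⁻¹ (σ0 i') i :=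
      mul_pos (hσ0A i') (by rw [← hii]; exact hσ0Ainv i)
    exact absurd hzz (ne_of_gt hp)
  -- rows vanish off σ0 i
  have hzero : ∀ i j, j ≠ σ0 i → A i j = 0 := by
    intro i j hne
    rcases (hApos i j).lt_or_eq with hpos | heq
    · exfalso
      obtain ⟨m, hm1, hm2⟩ := hex' j
      have hmi : m = i := by
        by_contra hmi
        have := hz i m (fun h => hmi h.symm) j
        exact absurd this (ne_of_gt (mul_pos hpos hm1))
      subst hmi
      -- A⁻¹ j m > 0 with m = i, and A i (σ0 i) > 0, j ≠ σ0 i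
      have hs : ∑ l, A⁻¹ j l * A l (σ0 m) = 0 := by
        rw [hmul2]; simp [Matrix.one_apply, hne]
      have hterm : 0 < A⁻¹ j m * A m (σ0 m) := mul_pos hm1 (hσ0A m)
      have hle : A⁻¹ j m * A m (σ0 m) ≤ ∑ l, A⁻¹ j l * A l (σ0 m) :=
        Finset.single_le_sum
          (fun l _ => mul_nonneg (hAinvpos j l) (hApos l (σ0 m))) (Finset.mem_univ m)
      rw [hs] at hle
      exact absurd hle (not_le.mpr hterm)
    · exact heq.symm
  have hbij : Function.Bijective σ0 := Finite.injective_iff_bijective.mp hinj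
  refine ⟨Equiv.ofBijective σ0 hbij, fun i => A i (σ0 i), fun i => hσ0A i, ?_⟩
  ext i j
  rw [Matrix.diagonal_mul]
  simp only [Matrix.of_apply, Equiv.ofBijective_apply]
  by_cases hj : j = σ0 i
  · subst hj; simp
  · simp [hj, hzero i j hj]
end

section
/- Let E be the additive subgroup of ℝ generated by the real numbers 1/(2^{2n+1}·P_n) + 3/(4^n·Q_n·π²) and 1/(2^{2n+1}·P_n) − 3/(4^n·Q_n·π²) for n ranging over the natural numbers (including n = 0). Then for every integer m, 2^m·E = E (i.e. {2^m·x : x ∈ E} = E). -/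
/-- `P n = ∏_{k=1}^{n} p_k²` where `p_1 < p_2 < …` are the primes (`Nat.nth Nat.Prime` is
the 0-indexed enumeration of the primes, so `Nat.nth Nat.Prime 0 = 2`). -/
noncomputable def Pprod (n : ℕ) : ℝ :=
  ∏ k ∈ Finset.range n, (Nat.nth Nat.Prime k : ℝ) ^ 2

/-- `Q n = ∏_{k=1}^{n} (p_k² - 1)`. -/
noncomputable def Qprod (n : ℕ) : ℝ :=
  ∏ k ∈ Finset.range n, ((Nat.nth Nat.Prime k : ℝ) ^ 2 - 1)

/-- The additive subgroup of `ℝ` generated by the numbers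
`1/(2^{2n+1}·P_n) ± 3/(4^n·Q_n·π²)` for `n : ℕ`. -/
noncomputable def genE : AddSubgroup ℝ :=
  AddSubgroup.closure
    {x : ℝ | ∃ n : ℕ,
      x = 1 / (2 ^ (2 * n + 1) * Pprod n) + 3 / (4 ^ n * Qprod n * Real.pi ^ 2) ∨
      x = 1 / (2 ^ (2 * n + 1) * Pprod n) - 3 / (4 ^ n * Qprod n * Real.pi ^ 2)}

lemma two_le_nth (k : ℕ) : (2:ℝ) ≤ (Nat.nth Nat.Prime k : ℝ) := by
  exact_mod_cast (Nat.prime_nth_prime k).two_le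

lemma Pprod_pos (n : ℕ) : 0 < Pprod n := by
  apply Finset.prod_pos
  intro k _
  have := two_le_nth k
  positivity

lemma Qprod_pos (n : ℕ) : 0 < Qprod n := by
  apply Finset.prod_pos
  intro k _
  have := two_le_nth k
  nlinarith

lemma gen_mem_plus (n : ℕ) :
    1 / (2 ^ (2 * n + 1) * Pprod n) + 3 / (4 ^ n * Qprod n * Real.pi ^ 2) ∈ genE :=
  AddSubgroup.subset_closure ⟨n, Or.inl rfl⟩

lemma gen_mem_minus (n : ℕ) :
    1 / (2 ^ (2 * n + 1) * Pprod n) - 3 / (4 ^ n * Qprod n * Real.pi ^ 2) ∈ genE :=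
  AddSubgroup.subset_closure ⟨n, Or.inr rfl⟩

lemma half_gen (n : ℕ) :
    (1 / (2 ^ (2 * n + 1) * Pprod n) + 3 / (4 ^ n * Qprod n * Real.pi ^ 2)) / 2 ∈ genE ∧
    (1 / (2 ^ (2 * n + 1) * Pprod n) - 3 / (4 ^ n * Qprod n * Real.pi ^ 2)) / 2 ∈ genE := by
  set p : ℝ := (Nat.nth Nat.Prime n : ℝ) with hp
  have hp2 : (2:ℝ) ≤ p := two_le_nth n
  have hP : 0 < Pprod n := Pprod_pos n
  have hQ : 0 < Qprod n := Qprod_pos n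
  have hpi : Real.pi ≠ 0 := Real.pi_ne_zero
  have hPs : Pprod (n+1) = Pprod n * p ^ 2 := by
    rw [Pprod, Finset.prod_range_succ]; rfl
  have hQs : Qprod (n+1) = Qprod n * (p ^ 2 - 1) := by
    rw [Qprod, Finset.prod_range_succ]; rfl
  have hpne : p ≠ 0 := by linarith
  have hp1 : p ^ 2 - 1 ≠ 0 := by nlinarith
  have key1 : (1 / (2 ^ (2 * n + 1) * Pprod n) + 3 / (4 ^ n * Qprod n * Real.pi ^ 2)) / 2 =
      ((2 * (Nat.nth Nat.Prime n : ℤ) ^ 2 - 1) : ℤ) •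
        (1 / (2 ^ (2 * (n+1) + 1) * Pprod (n+1)) + 3 / (4 ^ (n+1) * Qprod (n+1) * Real.pi ^ 2)) +
      (1 / (2 ^ (2 * (n+1) + 1) * Pprod (n+1)) - 3 / (4 ^ (n+1) * Qprod (n+1) * Real.pi ^ 2)) := by
    rw [zsmul_eq_mul, hPs, hQs]
    push_cast [← hp]
    field_simp
    ring
  have key2 : (1 / (2 ^ (2 * n + 1) * Pprod n) - 3 / (4 ^ n * Qprod n * Real.pi ^ 2)) / 2 =
      ((2 * (Nat.nth Nat.Prime n : ℤ) ^ 2 - 1) : ℤ) •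
        (1 / (2 ^ (2 * (n+1) + 1) * Pprod (n+1)) - 3 / (4 ^ (n+1) * Qprod (n+1) * Real.pi ^ 2)) +
      (1 / (2 ^ (2 * (n+1) + 1) * Pprod (n+1)) + 3 / (4 ^ (n+1) * Qprod (n+1) * Real.pi ^ 2)) := by
    rw [zsmul_eq_mul, hPs, hQs]
    push_cast [← hp]
    field_simp
    ring
  constructor
  · rw [key1]
    exact genE.add_mem (genE.zsmul_mem (gen_mem_plus (n+1)) _) (gen_mem_minus (n+1))
  · rw [key2]
    exact genE.add_mem (genE.zsmul_mem (gen_mem_minus (n+1)) _) (gen_mem_plus (n+1))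

lemma half_mem {x : ℝ} (hx : x ∈ genE) : x / 2 ∈ genE := by
  induction hx using AddSubgroup.closure_induction with
  | mem g hg =>
    obtain ⟨n, h | h⟩ := hg
    · rw [h]; exact (half_gen n).1
    · rw [h]; exact (half_gen n).2
  | zero => simpa using genE.zero_mem
  | add x y _ _ hx hy => rw [add_div]; exact genE.add_mem hx hy
  | neg x _ hx => rw [neg_div]; exact genE.neg_mem hx

lemma key (m : ℤ) {x : ℝ} (hx : x ∈ genE) : (2:ℝ) ^ m * x ∈ genE := by
  induction m using Int.induction_on with
  | zero => simpa using hx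
  | succ k ih =>
    have : (2:ℝ) ^ ((k:ℤ)+1) * x = (2:ℝ)^(k:ℤ) * x + (2:ℝ)^(k:ℤ) * x := by
      rw [zpow_add_one₀ (by norm_num : (2:ℝ) ≠ 0)]; ring
    rw [this]; exact genE.add_mem ih ih
  | pred k ih =>
    have : (2:ℝ) ^ (-(k:ℤ)-1) * x = ((2:ℝ)^(-(k:ℤ)) * x) / 2 := by
      rw [sub_eq_add_neg, zpow_add₀ (by norm_num : (2:ℝ) ≠ 0)]
      simp [zpow_neg]; ring
    rw [this]; exact half_mem ih

/-- For every integer `m`, `2^m · E = E`. -/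
theorem stmt3 (m : ℤ) :
    (fun x => (2 : ℝ) ^ m * x) '' (genE : Set ℝ) = (genE : Set ℝ) := by
  ext y
  simp only [Set.mem_image, SetLike.mem_coe]
  constructor
  · rintro ⟨x, hx, rfl⟩
    exact key m hx
  · intro hy
    refine ⟨(2:ℝ) ^ (-m) * y, key (-m) hy, ?_⟩
    rw [← mul_assoc, ← zpow_add₀ (by norm_num : (2:ℝ) ≠ 0)]
    simp
end

section
/- Let A be a simple unital C*-algebra, let n ≥ 2, let φ₁, …, φₙ be nonzero positive bounded traces on A, and let u₁, …, uₙ ∈ A be a dual system, i.e. φᵢ(uⱼ) = δᵢⱼ for all i, j. Then no uⱼ is a positive element of A (for each j it is not the case that 0 ≤ uⱼ). -/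
open scoped ComplexOrder

section aux

variable {A : Type*} [NormedRing A] [StarRing A] [CStarRing A]
    [NormedAlgebra ℂ A] [StarModule ℂ A]

private lemma stmt10_im (φ : A →L[ℂ] ℂ) (hp : ∀ a : A, 0 ≤ φ (star a * a)) (a : A) :
    (φ (star a * a)).im = 0 := ((Complex.nonneg_iff.mp (hp a)).2).symm

private lemma stmt10_herm (φ : A →L[ℂ] ℂ) (hp : ∀ a : A, 0 ≤ φ (star a * a)) (x y : A) :
    φ (star y * x) = starRingEnd ℂ (φ (star x * y)) := by
  set c := φ (star x * y) with hc
  set d := φ (star y * x) with hd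
  have e1 : φ (star (x + y) * (x + y)) =
      φ (star x * x) + (c + d) + φ (star y * y) := by
    rw [star_add, add_mul, mul_add, mul_add]
    simp only [map_add, hc, hd]; ring
  have e2 : φ (star (Complex.I • x + y) * (Complex.I • x + y)) =
      φ (star x * x) + (-Complex.I * c + Complex.I * d) + φ (star y * y) := by
    rw [star_add, star_smul, add_mul, mul_add, mul_add]
    simp only [map_add, smul_mul_assoc, mul_smul_comm, map_smul, smul_smul, smul_eq_mul,
      RCLike.star_def, Complex.conj_I, hc, hd]
    ring_nf
    simp [Complex.I_sq]
  have i1 := congrArg Complex.im e1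
  have i2 := congrArg Complex.im e2
  rw [stmt10_im φ hp] at i1 i2
  simp only [Complex.add_im, stmt10_im φ hp, Complex.mul_im, Complex.neg_re, Complex.neg_im,
    Complex.I_re, Complex.I_im] at i1 i2
  apply Complex.ext
  · simp only [Complex.conj_re]; linarith
  · simp only [Complex.conj_im]; linarith

private noncomputable def stmt10_core (φ : A →L[ℂ] ℂ) (hp : ∀ a : A, 0 ≤ φ (star a * a)) :
    PreInnerProductSpace.Core ℂ A where
  inner x y := φ (star x * y)
  conj_inner_symm x y := (stmt10_herm φ hp y x).symm
  re_inner_nonneg x := (Complex.nonneg_iff.mp (hp x)).1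
  add_left x y z := by
    show φ (star (x + y) * z) = φ (star x * z) + φ (star y * z)
    rw [star_add, add_mul, map_add]
  smul_left x y r := by
    show φ (star (r • x) * y) = starRingEnd ℂ r * φ (star x * y)
    rw [star_smul, smul_mul_assoc, map_smul, smul_eq_mul, RCLike.star_def]

private lemma stmt10_orth (φ : A →L[ℂ] ℂ) (hp : ∀ a : A, 0 ≤ φ (star a * a))
    {x : A} (hx : φ (star x * x) = 0) (w : A) :
    φ (star x * w) = 0 ∧ φ (star w * x) = 0 := by
  letI C := stmt10_core φ hp
  have key := @InnerProductSpace.Core.inner_mul_inner_self_le ℂ A _ _ _ C x w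
  have h1 : (@inner ℂ A C.toInner x w) = φ (star x * w) := rfl
  have h2 : (@inner ℂ A C.toInner w x) = φ (star w * x) := rfl
  have h3 : (@inner ℂ A C.toInner x x) = φ (star x * x) := rfl
  have h4 : φ (star w * x) = starRingEnd ℂ (φ (star x * w)) := stmt10_herm φ hp x w
  rw [h1, h2, h3, hx, h4, RCLike.norm_conj] at key
  simp only [map_zero, RCLike.zero_re, zero_mul] at key
  have : ‖φ (star x * w)‖ = 0 := by nlinarith [norm_nonneg (φ (star x * w))]
  have hz : φ (star x * w) = 0 := norm_eq_zero.mp this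
  exact ⟨hz, by rw [h4, hz, map_zero]⟩

end aux

/-- Let `A` be a simple unital C*-algebra, `n ≥ 2`, `φ₁, …, φₙ` nonzero positive bounded
traces on `A`, and `u₁, …, uₙ` a dual system (`φ i (u j) = δᵢⱼ`). Then no `u j` is a
positive element of `A`, i.e. no `u j` is of the form `star a * a`. -/
theorem stmt10 {A : Type*} [NormedRing A] [StarRing A] [CStarRing A]
    [NormedAlgebra ℂ A] [StarModule ℂ A] [CompleteSpace A]
    (hsimple : ∀ I : TwoSidedIdeal A, IsClosed (I : Set A) →
      (I : Set A) = {0} ∨ (I : Set A) = Set.univ)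
    (n : ℕ) (hn : 2 ≤ n) (φ : Fin n → (A →L[ℂ] ℂ))
    (hne : ∀ i, φ i ≠ 0)
    (htrace : ∀ i, ∀ a b : A, φ i (a * b) = φ i (b * a))
    (hpos : ∀ i, ∀ a : A, 0 ≤ φ i (star a * a))
    (u : Fin n → A)
    (hdual : ∀ i j, φ i (u j) = if i = j then 1 else 0) :
    ∀ j, ¬ ∃ a : A, u j = star a * a := by
  rintro j ⟨a, ha⟩
  obtain ⟨i, hij⟩ : ∃ i : Fin n, i ≠ j :=
    Fintype.exists_ne_of_one_lt_card (by simpa using (show 1 < n by omega)) j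
  set ψ := φ i with hψ
  have hp : ∀ b : A, 0 ≤ ψ (star b * b) := hpos i
  -- the null ideal of ψ
  set S : Set A := {x : A | ψ (star x * x) = 0} with hS
  have orth := fun {x : A} (hx : x ∈ S) (w : A) => stmt10_orth ψ hp hx w
  have star_mem : ∀ {x : A}, x ∈ S → star x ∈ S := by
    intro x hx
    show ψ (star (star x) * star x) = 0
    rw [star_star, htrace i, hx]
  let N : TwoSidedIdeal A := TwoSidedIdeal.mk' S
    (by simp [hS])
    (by
      intro x y hx hy
      show ψ (star (x + y) * (x + y)) = 0
      rw [star_add, add_mul, mul_add, mul_add]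
      have hx' : ψ (star x * x) = 0 := hx
      have hy' : ψ (star y * y) = 0 := hy
      simp only [map_add, hx', hy', (orth hx y).1, (orth hy x).1]
      ring)
    (by
      intro x hx
      show ψ (star (-x) * (-x)) = 0
      have hx' : ψ (star x * x) = 0 := hx
      simpa using hx')
    (by
      intro x y hy
      show ψ (star (x * y) * (x * y)) = 0
      rw [star_mul, mul_assoc]
      exact (orth hy (star x * (x * y))).1)
    (by
      intro x y hx
      show ψ (star (x * y) * (x * y)) = 0
      rw [htrace i]
      have : (x * y) * star (x * y) = star (star x) * (y * star (x * y)) := by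
        rw [star_star, mul_assoc]
      rw [this]
      exact (orth (star_mem hx) (y * star (x * y))).1)
  have hNclosed : IsClosed (N : Set A) := by
    rw [TwoSidedIdeal.coe_mk']
    have hc : Continuous fun x : A => ψ (star x * x) :=
      ψ.continuous.comp (continuous_star.mul continuous_id)
    exact isClosed_eq hc continuous_const
  have hNS : (N : Set A) = S := TwoSidedIdeal.coe_mk' _ _ _ _ _ _
  have haS : a ∈ S := by
    show ψ (star a * a) = 0
    rw [← ha, hdual i j, if_neg hij]
  rcases hsimple N hNclosed with h | h
  · rw [hNS] at h
    have ha0 : a = 0 := by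
      have : a ∈ ({0} : Set A) := h ▸ haS
      simpa using this
    have : φ j (u j) = 0 := by rw [ha, ha0]; simp
    rw [hdual j j, if_pos rfl] at this
    exact one_ne_zero this
  · rw [hNS] at h
    apply hne i
    ext c
    have h1 : (1 : A) ∈ S := h ▸ Set.mem_univ 1
    have := (orth h1 c).1
    rwa [star_one, one_mul] at this
end
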